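/- Let Z be a CAT(1) space with mutually opposite suspenders p₀ and q₀. Then for all z₁, z₂ ∈ Z with d(z₁,z₂) ≥ π, one has d(z₁,p₀) + d(p₀,z₂) = π and d(z₁,q₀) + d(q₀,z₂) = π. In particular diam Z = π. -/
import Mathlib


open Real Metric

/-- A metric space is `CAT(1)` if every pair of points at distance `< π` has a midpoint
satisfying the spherical comparison (CN-type) inequality against triangles of perimeter
`< 2π` in the unit sphere. -/
def IsCATOne (Z : Type*) [MetricSpace Z] : Prop :=
  ∀ x y : Z, dist x y < π →
    ∃ m : Z, dist x m = dist x y / 2 ∧ dist m y = dist x y / 2 ∧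
      ∀ p : Z, dist p x + dist x y + dist y p < 2 * π →
        (Real.cos (dist p x) + Real.cos (dist p y)) / 2 ≤
          Real.cos (dist p m) * Real.cos (dist x y / 2)

/-- If `p₀, q₀` are mutually opposite suspenders in a CAT(1) space `Z`, then for all
`z₁, z₂` with `d(z₁,z₂) ≥ π` one has `d(z₁,p₀) + d(p₀,z₂) = π` and
`d(z₁,q₀) + d(q₀,z₂) = π`; in particular `diam Z = π`. -/
theorem stmt_1 {Z : Type*} [MetricSpace Z] (hZ : IsCATOne Z) (p₀ q₀ : Z)
    (h : ∀ z : Z, dist p₀ z + dist z q₀ = π) :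
    (∀ z₁ z₂ : Z, π ≤ dist z₁ z₂ →
      dist z₁ p₀ + dist p₀ z₂ = π ∧ dist z₁ q₀ + dist q₀ z₂ = π) ∧
    Metric.diam (Set.univ : Set Z) = π := by
  have hpq : dist p₀ q₀ = π := by have := h p₀; simpa using this
  have hle : ∀ x y : Z, dist x y ≤ π := by
    intro x y
    have h1 : dist x y ≤ dist x p₀ + dist p₀ y := dist_triangle _ _ _
    have h2 : dist x y ≤ dist x q₀ + dist q₀ y := dist_triangle _ _ _
    have hx := h x; have hy := h y
    rw [dist_comm p₀ x] at hx; rw [dist_comm p₀ y] at hy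
    have hq : dist x q₀ + dist q₀ y = 2 * π - (dist x p₀ + dist p₀ y) := by
      rw [dist_comm q₀ y, dist_comm p₀ y]; linarith
    nlinarith [dist_nonneg (x := x) (y := p₀), dist_nonneg (x := p₀) (y := y)]
  constructor
  · intro z₁ z₂ hz
    have h1 : dist z₁ z₂ ≤ dist z₁ p₀ + dist p₀ z₂ := dist_triangle _ _ _
    have h2 : dist z₁ z₂ ≤ dist z₁ q₀ + dist q₀ z₂ := dist_triangle _ _ _
    have h3 := h z₁; have h4 := h z₂
    rw [dist_comm p₀ z₁] at h3
    have hq : dist z₁ q₀ + dist q₀ z₂ = 2 * π - (dist z₁ p₀ + dist p₀ z₂) := by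
      rw [dist_comm q₀ z₂]; linarith
    constructor <;> linarith
  · refine le_antisymm (Metric.diam_le_of_forall_dist_le Real.pi_pos.le
      fun x _ y _ => hle x y) ?_
    calc π = dist p₀ q₀ := hpq.symm
      _ ≤ Metric.diam (Set.univ : Set Z) :=
        Metric.dist_le_diam_of_mem
          (Metric.isBounded_iff.2 ⟨π, fun a _ b _ => hle a b⟩)
          (Set.mem_univ _) (Set.mem_univ _)
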